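/- For all natural numbers i and j, ∑_{k=0}^{i} (−1)^{j+k} · a_{ik} · r_{kj} = (1 if i = j, else 0), where a_{ik} is the coefficient of x^i in (x(1+x))^k ∈ ℝ[[x]] and r_{kj} is the coefficient of x^k in (xC(x))^j ∈ ℝ[[x]]. (In matrix form this says that the lower triangular matrix with (i,j) entry r_{ij} is the inverse of D𝔽^S D, i.e. D(𝔽^S)⁻¹D = (1, xC(x)).) -/

import Mathlib

open PowerSeries Finset

/-- The generating function of the Catalan numbers. -/
noncomputable def catalanGF : PowerSeries ℝ :=
  PowerSeries.mk fun n => (catalan n : ℝ)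

namespace StmtAux

noncomputable def g : PowerSeries ℝ := X * (1 + X)

noncomputable def sb (N : ℕ) (P : PowerSeries ℝ) : PowerSeries ℝ :=
  Polynomial.aeval (-g) (trunc N P)

lemma X_dvd_g : (X : PowerSeries ℝ) ∣ g := Dvd.intro _ rfl

lemma lemA {N : ℕ} {p : Polynomial ℝ} (h : ∀ m < N, p.coeff m = 0) :
    (X : PowerSeries ℝ) ^ N ∣ Polynomial.aeval (-g) p := by
  obtain ⟨q, hq⟩ := Polynomial.X_pow_dvd_iff.mpr h
  rw [hq, map_mul, map_pow, Polynomial.aeval_X]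
  exact dvd_mul_of_dvd_left (pow_dvd_pow_of_dvd (dvd_neg.mpr X_dvd_g) N) _

lemma sb_mul (N : ℕ) (P Q : PowerSeries ℝ) :
    (X : PowerSeries ℝ) ^ N ∣ sb N (P * Q) - sb N P * sb N Q := by
  rw [sb, sb, sb, ← map_mul, ← map_sub]
  apply lemA
  intro m hm
  rw [Polynomial.coeff_sub, PowerSeries.coeff_trunc, if_pos hm]
  have h1 := PowerSeries.coeff_mul_eq_coeff_trunc_mul_trunc (n := N) P Q hm
  rw [h1, ← Polynomial.coe_mul, Polynomial.coeff_coe, sub_self]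

lemma sb_add (N : ℕ) (P Q : PowerSeries ℝ) : sb N (P + Q) = sb N P + sb N Q := by
  rw [sb, sb, sb, map_add, map_add]

lemma sb_one (n : ℕ) : sb (n + 1) 1 = 1 := by
  rw [sb, trunc_one, map_one]

lemma sb_X (n : ℕ) : sb (n + 2) X = -g := by
  rw [sb, trunc_X, Polynomial.aeval_X]

lemma coeff_sb (N i : ℕ) (P : PowerSeries ℝ) :
    coeff (R := ℝ) i (sb N P) =
      ∑ k ∈ Finset.range N, coeff (R := ℝ) k P * coeff (R := ℝ) i ((-g) ^ k) := by
  rw [sb, Polynomial.aeval_def, eval₂_trunc_eq_sum_range, map_sum]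
  refine Finset.sum_congr rfl fun k _ => ?_
  rw [Algebra.algebraMap_eq_smul_one, smul_mul_assoc, one_mul, map_smul, smul_eq_mul]

/-- The inverse of `1 + X`. -/
noncomputable def T : PowerSeries ℝ := PowerSeries.mk fun n => (-1 : ℝ) ^ n

lemma hT : ((1 : PowerSeries ℝ) + X) * T = 1 := by
  ext n
  cases n with
  | zero => simp [T]
  | succ n =>
    rw [add_mul, one_mul, map_add, coeff_succ_X_mul]
    simp [T, pow_succ]

lemma hgT : g * T ^ 2 = X * T := by
  have : g * T ^ 2 = X * (((1 : PowerSeries ℝ) + X) * T) * T := by rw [g]; ring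
  rw [this, hT, mul_one]

lemma hT2 : T = 1 - g * T ^ 2 := by
  rw [hgT]
  linear_combination hT

lemma uniq {N : ℕ} (Sv : PowerSeries ℝ)
    (h : (X : PowerSeries ℝ) ^ N ∣ Sv - (1 - g * Sv ^ 2)) :
    (X : PowerSeries ℝ) ^ N ∣ Sv - T := by
  have hV : IsUnit ((1 : PowerSeries ℝ) + g * (Sv + T)) := by
    rw [PowerSeries.isUnit_iff_constantCoeff]
    simp [g]
  have key : (X : PowerSeries ℝ) ^ N ∣ (1 + g * (Sv + T)) * (Sv - T) := by
    have h2 : ((1 : PowerSeries ℝ) + g * (Sv + T)) * (Sv - T) =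
        (Sv - (1 - g * Sv ^ 2)) - (T - (1 - g * T ^ 2)) := by ring
    have h3 : T - ((1 : PowerSeries ℝ) - g * T ^ 2) = 0 := by
      rw [← hT2]; exact sub_self T
    rw [h2, h3, sub_zero]
    exact h
  exact (hV.dvd_mul_left).mp key

lemma hC : catalanGF = 1 + X * catalanGF ^ 2 := by
  ext n
  cases n with
  | zero => simp [catalanGF]
  | succ n =>
    rw [map_add, coeff_succ_X_mul, pow_two, PowerSeries.coeff_mul]
    have h1 : coeff (R := ℝ) (n + 1) (1 : PowerSeries ℝ) = 0 := by
      rw [PowerSeries.coeff_one]; simp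
    rw [h1, zero_add]
    simp only [catalanGF, PowerSeries.coeff_mk]
    rw [catalan_succ']
    push_cast
    rfl

lemma hSC (n : ℕ) : (X : PowerSeries ℝ) ^ (n + 2) ∣ sb (n + 2) catalanGF - T := by
  set N := n + 2 with hN
  apply uniq
  have hA : sb N catalanGF = 1 + sb N (X * catalanGF ^ 2) := by
    conv_lhs => rw [hC]
    rw [sb_add, hN, sb_one]
  have hX : sb N X = -g := sb_X n
  have e3 := sb_mul N X (catalanGF ^ 2)
  have e4 : (X : PowerSeries ℝ) ^ N ∣ sb N (catalanGF ^ 2) - (sb N catalanGF) ^ 2 := by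
    have := sb_mul N catalanGF catalanGF
    rw [← pow_two, ← pow_two] at this
    exact this
  have hz : sb N catalanGF - (1 - g * (sb N catalanGF) ^ 2) =
      (sb N (X * catalanGF ^ 2) - sb N X * sb N (catalanGF ^ 2))
        + (-g) * (sb N (catalanGF ^ 2) - (sb N catalanGF) ^ 2) := by
    rw [hA, hX]; ring
  rw [hz]
  exact dvd_add e3 (Dvd.dvd.mul_left e4 (-g))

lemma hF (n : ℕ) : (X : PowerSeries ℝ) ^ (n + 2) ∣ sb (n + 2) (X * catalanGF) + X := by
  set N := n + 2 with hN
  have h1 := sb_mul N X catalanGF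
  have hX : sb N X = -g := sb_X n
  have h3 : (-g) * T + X = 0 := by
    rw [g]; linear_combination -X * hT
  have hz : sb N (X * catalanGF) + X =
      (sb N (X * catalanGF) - sb N X * sb N catalanGF)
        + (-g) * (sb N catalanGF - T) + ((-g) * T + X) := by
    rw [hX]; ring
  rw [hz, h3, add_zero]
  exact dvd_add h1 (Dvd.dvd.mul_left (hSC n) (-g))

lemma hFj (n j : ℕ) :
    (X : PowerSeries ℝ) ^ (n + 2) ∣ sb (n + 2) ((X * catalanGF) ^ j) - (-X) ^ j := by
  induction j with
  | zero =>
    rw [pow_zero, pow_zero, show n + 2 = (n + 1) + 1 from rfl, sb_one, sub_self]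
    exact dvd_zero _
  | succ j ih =>
    set N := n + 2 with hN
    have h1 : (X : PowerSeries ℝ) ^ N ∣
        sb N ((X * catalanGF) ^ (j + 1)) - sb N ((X * catalanGF) ^ j) * sb N (X * catalanGF) := by
      rw [pow_succ]
      exact sb_mul N _ _
    have hz : sb N ((X * catalanGF) ^ (j + 1)) - (-X) ^ (j + 1) =
        (sb N ((X * catalanGF) ^ (j + 1)) - sb N ((X * catalanGF) ^ j) * sb N (X * catalanGF))
          + sb N ((X * catalanGF) ^ j) * (sb N (X * catalanGF) + X)
          + (-X) * (sb N ((X * catalanGF) ^ j) - (-X) ^ j) := by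
      ring
    rw [hz]
    exact dvd_add (dvd_add h1 (Dvd.dvd.mul_left (hF n) _)) (Dvd.dvd.mul_left ih (-X))

end StmtAux

/-- `D(𝔽^S)⁻¹D = (1, xC(x))`: the matrix with `(i,j)` entry the coefficient of `x^i` in
`(xC(x))^j` is the inverse of the matrix with `(i,j)` entry
`(-1)^(i+j)` times the coefficient of `x^i` in `(x(1+x))^j`. -/
theorem stmt_0 (i j : ℕ) :
    (∑ k ∈ Finset.range (i + 1),
        (-1 : ℝ) ^ (j + k) *
          (PowerSeries.coeff (R := ℝ) i ((PowerSeries.X * (1 + PowerSeries.X)) ^ k)) *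
          (PowerSeries.coeff (R := ℝ) k ((PowerSeries.X * catalanGF) ^ j))) =
      if i = j then (1 : ℝ) else 0 := by
  open StmtAux in
  have hgdef : (PowerSeries.X * (1 + PowerSeries.X) : PowerSeries ℝ) = g := rfl
  have hcoeff_neg_g : ∀ k, coeff (R := ℝ) i ((-g) ^ k) = (-1 : ℝ) ^ k * coeff (R := ℝ) i (g ^ k) := by
    intro k
    rw [← neg_one_smul ℝ g, smul_pow, map_smul, smul_eq_mul]
  -- main approximation
  have hdvd := StmtAux.hFj i j
  have hco : coeff (R := ℝ) i (sb (i + 2) ((X * catalanGF) ^ j)) = coeff (R := ℝ) i ((-X) ^ j) := by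
    have h0 := PowerSeries.X_pow_dvd_iff.mp hdvd i (by omega)
    rw [map_sub, sub_eq_zero] at h0
    exact h0
  rw [coeff_sb] at hco
  -- drop the k = i+1 term
  have hlast : coeff (R := ℝ) (i + 1) ((X * catalanGF) ^ j) * coeff (R := ℝ) i ((-g) ^ (i + 1)) =
      coeff (R := ℝ) (i + 1) ((X * catalanGF) ^ j) * 0 := by
    congr 1
    exact PowerSeries.X_pow_dvd_iff.mp
      (pow_dvd_pow_of_dvd (dvd_neg.mpr X_dvd_g) (i + 1)) i (Nat.lt_succ_self i)
  rw [show i + 2 = (i + 1) + 1 from rfl, Finset.sum_range_succ, hlast, mul_zero, add_zero] at hco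
  -- rewrite RHS of hco
  have hrhs : coeff (R := ℝ) i ((-X : PowerSeries ℝ) ^ j) =
      (-1 : ℝ) ^ j * (if i = j then (1 : ℝ) else 0) := by
    rw [← neg_one_smul ℝ (X : PowerSeries ℝ), smul_pow, map_smul, smul_eq_mul,
      PowerSeries.coeff_X_pow]
  rw [hrhs] at hco
  have hsum : (∑ k ∈ Finset.range (i + 1),
      (-1 : ℝ) ^ (j + k) *
        (PowerSeries.coeff (R := ℝ) i ((PowerSeries.X * (1 + PowerSeries.X)) ^ k)) *
        (PowerSeries.coeff (R := ℝ) k ((PowerSeries.X * catalanGF) ^ j))) =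
      (-1 : ℝ) ^ j * ∑ k ∈ Finset.range (i + 1),
        coeff (R := ℝ) k ((X * catalanGF) ^ j) * coeff (R := ℝ) i ((-g) ^ k) := by
    rw [Finset.mul_sum]
    refine Finset.sum_congr rfl fun k _ => ?_
    rw [hgdef, hcoeff_neg_g, pow_add]
    ring
  rw [hsum, hco]
  rw [← mul_assoc, ← pow_add, ← two_mul, pow_mul]
  norm_num
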